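/- Let Σ be a symmetric positive semidefinite k×k real matrix with all entries nonnegative. Then the function z ↦ (z∘z)ᵀ Σ (z∘z), where z∘z denotes the componentwise (Hadamard) square, is convex on ℝ^k. -/

import Mathlib

open Matrix

/-- for a symmetric PSD matrix `S` with nonnegative entries,
`z ↦ (z∘z)ᵀ S (z∘z)` is convex (here `z * z` is the Hadamard square). -/
theorem hadamard_square_quartic_convex {k : ℕ} (S : Matrix (Fin k) (Fin k) ℝ)
    (hS : S.PosSemidef) (hnn : ∀ i j, 0 ≤ S i j) :
    ConvexOn ℝ Set.univ (fun z : Fin k → ℝ => (z * z) ⬝ᵥ (S *ᵥ (z * z))) := by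
  -- quadratic form basics
  have hQ : ∀ u : Fin k → ℝ, 0 ≤ u ⬝ᵥ (S *ᵥ u) := by
    intro u
    simpa using hS.dotProduct_mulVec_nonneg u
  have hsym : ∀ u v : Fin k → ℝ, u ⬝ᵥ (S *ᵥ v) = v ⬝ᵥ (S *ᵥ u) := by
    intro u v
    have hT : Sᵀ = S := by
      have := hS.1
      simpa [Matrix.IsHermitian, Matrix.conjTranspose_eq_transpose_of_trivial] using this
    rw [Matrix.dotProduct_mulVec, ← Matrix.mulVec_transpose, hT, dotProduct_comm]
  -- monotonicity of the quadratic form on the nonnegative orthant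
  have hmono : ∀ u v : Fin k → ℝ, (∀ i, 0 ≤ u i) → (∀ i, u i ≤ v i) →
      u ⬝ᵥ (S *ᵥ u) ≤ v ⬝ᵥ (S *ᵥ v) := by
    intro u v hu huv
    have hvpos : ∀ i, 0 ≤ v i := fun i => le_trans (hu i) (huv i)
    have hdot : ∀ (p q : Fin k → ℝ), (∀ i, 0 ≤ p i) → (∀ i, 0 ≤ q i) →
        0 ≤ p ⬝ᵥ (S *ᵥ q) := by
      intro p q hp hq
      apply Finset.sum_nonneg
      intro i _
      apply mul_nonneg (hp i)
      simp only [Matrix.mulVec, dotProduct]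
      apply Finset.sum_nonneg
      intro j _
      exact mul_nonneg (hnn i j) (hq j)
    have h1 : 0 ≤ (v - u) ⬝ᵥ (S *ᵥ v) :=
      hdot _ _ (fun i => by simpa using sub_nonneg.2 (huv i)) hvpos
    have h2 : 0 ≤ (v - u) ⬝ᵥ (S *ᵥ u) :=
      hdot _ _ (fun i => by simpa using sub_nonneg.2 (huv i)) hu
    have hexp : v ⬝ᵥ (S *ᵥ v) - u ⬝ᵥ (S *ᵥ u)
        = (v - u) ⬝ᵥ (S *ᵥ v) + (v - u) ⬝ᵥ (S *ᵥ u) := by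
      have : u ⬝ᵥ (S *ᵥ v) = v ⬝ᵥ (S *ᵥ u) := hsym u v
      simp [sub_dotProduct, Matrix.mulVec_sub, dotProduct_sub]
      ring_nf
      nlinarith [this]
    nlinarith [h1, h2, hexp]
  refine ⟨convex_univ, ?_⟩
  intro x _ y _ a b ha hb hab
  simp only
  set u : Fin k → ℝ := x * x with hu
  set v : Fin k → ℝ := y * y with hv
  set w : Fin k → ℝ := (a • x + b • y) * (a • x + b • y) with hw
  have hw0 : ∀ i, 0 ≤ w i := by
    intro i
    simp only [hw, Pi.mul_apply]
    exact mul_self_nonneg _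
  have hwle : ∀ i, w i ≤ (a • u + b • v) i := by
    intro i
    simp only [hw, hu, hv, Pi.mul_apply, Pi.add_apply, Pi.smul_apply, smul_eq_mul]
    nlinarith [sq_nonneg (x i - y i), mul_nonneg ha hb]
  have step1 : w ⬝ᵥ (S *ᵥ w) ≤ (a • u + b • v) ⬝ᵥ (S *ᵥ (a • u + b • v)) :=
    hmono _ _ hw0 hwle
  -- convexity of the quadratic form
  have step2 : (a • u + b • v) ⬝ᵥ (S *ᵥ (a • u + b • v))
      ≤ a * (u ⬝ᵥ (S *ᵥ u)) + b * (v ⬝ᵥ (S *ᵥ v)) := by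
    have hexp : (a • u + b • v) ⬝ᵥ (S *ᵥ (a • u + b • v))
        = a * a * (u ⬝ᵥ (S *ᵥ u)) + a * b * (u ⬝ᵥ (S *ᵥ v))
          + b * a * (v ⬝ᵥ (S *ᵥ u)) + b * b * (v ⬝ᵥ (S *ᵥ v)) := by
      simp [add_dotProduct, dotProduct_add, Matrix.mulVec_add,
        Matrix.mulVec_smul, smul_dotProduct, dotProduct_smul, smul_eq_mul]
      ring
    have hdiff : 0 ≤ (u - v) ⬝ᵥ (S *ᵥ (u - v)) := hQ _
    have hdiffexp : (u - v) ⬝ᵥ (S *ᵥ (u - v))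
        = u ⬝ᵥ (S *ᵥ u) - u ⬝ᵥ (S *ᵥ v) - v ⬝ᵥ (S *ᵥ u) + v ⬝ᵥ (S *ᵥ v) := by
      simp [sub_dotProduct, dotProduct_sub, Matrix.mulVec_sub]
      ring
    have key : 0 ≤ a * b * ((u - v) ⬝ᵥ (S *ᵥ (u - v))) :=
      mul_nonneg (mul_nonneg ha hb) hdiff
    rw [hdiffexp] at key
    rw [hexp]
    have hb' : b = 1 - a := by linarith
    subst hb'
    nlinarith [key]
  calc w ⬝ᵥ (S *ᵥ w) ≤ (a • u + b • v) ⬝ᵥ (S *ᵥ (a • u + b • v)) := step1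
    _ ≤ a * (u ⬝ᵥ (S *ᵥ u)) + b * (v ⬝ᵥ (S *ᵥ v)) := step2
    _ = a • (u ⬝ᵥ (S *ᵥ u)) + b • (v ⬝ᵥ (S *ᵥ v)) := by simp [smul_eq_mul]
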